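/- arXiv:2104.02626 — 2 statements merged into one kernel-verified Lean document; each statement's English description precedes it below -/
import Mathlib

section
/- Let λ, k_d > 0, k_ad = λ k_d, and define S(Φ, Γ) = k_ad (Φ/Φ∞)(1 - Γ/Γ∞) - k_d (Γ/Γ∞) for Φ ∈ (0, Φ∞), Γ ∈ (0, Γ∞). With f and g the dilute bulk and Langmuir surface free energies (with λ = exp((μ_b - μ_s)/(R T))), one has (g'(Γ) - f'(Φ)) · S(Φ, Γ) ≤ 0 for all such Φ, Γ. -/
lemma log_key {a b : ℝ} (ha : 0 < a) (hb : 0 < b) :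
    (Real.log b - Real.log a) * (a - b) ≤ 0 := by
  rcases le_total a b with h | h
  · exact mul_nonpos_of_nonneg_of_nonpos
      (by simpa using sub_nonneg.mpr (Real.log_le_log ha h)) (by linarith)
  · exact mul_nonpos_of_nonpos_of_nonneg
      (by simpa using sub_nonpos.mpr (Real.log_le_log hb h)) (by linarith)

lemma xlogx_deriv (c x : ℝ) (hx : x / c ≠ 0) :
    HasDerivAt (fun t : ℝ => (t / c) * Real.log (t / c))
      ((Real.log (x / c) + 1) * (1 / c)) x := by
  have h1 : HasDerivAt (fun t : ℝ => t / c) (1 / c) x := by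
    simpa using (hasDerivAt_id x).div_const c
  exact (Real.hasDerivAt_mul_log hx).comp x h1

lemma one_sub_xlogx_deriv (c x : ℝ) (hx : 1 - x / c ≠ 0) :
    HasDerivAt (fun t : ℝ => (1 - t / c) * Real.log (1 - t / c))
      ((Real.log (1 - x / c) + 1) * (-(1 / c))) x := by
  have h1 : HasDerivAt (fun t : ℝ => 1 - t / c) (-(1 / c)) x := by
    simpa using ((hasDerivAt_id x).div_const c).const_sub 1
  exact (Real.hasDerivAt_mul_log hx).comp x h1

theorem statement5 (μb μs γ0 R T Φinf Γinf kd lam kad : ℝ)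
    (hR : 0 < R) (hT : 0 < T) (hΦinf : 0 < Φinf) (hΓinf : 0 < Γinf)
    (hkd : 0 < kd) (hlam : 0 < lam)
    (hlameq : lam = Real.exp ((μb - μs) / (R * T)))
    (hkad : kad = lam * kd)
    (f g : ℝ → ℝ)
    (hf : ∀ Φ, f Φ = μb * Φ + R * T * Φinf * ((Φ / Φinf) * Real.log (Φ / Φinf) - Φ / Φinf))
    (hg : ∀ Γ, g Γ = γ0 + μs * Γ + R * T * Γinf *
      ((Γ / Γinf) * Real.log (Γ / Γinf) + (1 - Γ / Γinf) * Real.log (1 - Γ / Γinf)))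
    (S : ℝ → ℝ → ℝ)
    (hS : ∀ Φ Γ, S Φ Γ = kad * (Φ / Φinf) * (1 - Γ / Γinf) - kd * (Γ / Γinf)) :
    ∀ Φ ∈ Set.Ioo (0 : ℝ) Φinf, ∀ Γ ∈ Set.Ioo (0 : ℝ) Γinf,
      (deriv g Γ - deriv f Φ) * S Φ Γ ≤ 0 := by
  intro Φ hΦ Γ hΓ
  obtain ⟨hΦ0, hΦ1⟩ := hΦ
  obtain ⟨hΓ0, hΓ1⟩ := hΓ
  set x : ℝ := Φ / Φinf with hxdef
  set y : ℝ := Γ / Γinf with hydef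
  have hx0 : 0 < x := div_pos hΦ0 hΦinf
  have hx1 : x < 1 := (div_lt_one hΦinf).mpr hΦ1
  have hy0 : 0 < y := div_pos hΓ0 hΓinf
  have hy1 : y < 1 := (div_lt_one hΓinf).mpr hΓ1
  have hRT : 0 < R * T := mul_pos hR hT
  -- derivative of f
  have hfd : deriv f Φ = μb + R * T * Real.log x := by
    have hfe : f = fun t => μb * t + R * T * Φinf *
        ((t / Φinf) * Real.log (t / Φinf) - t / Φinf) := funext hf
    have h1 : HasDerivAt (fun t : ℝ => μb * t) μb Φ := by
      simpa using (hasDerivAt_id Φ).const_mul μb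
    have h2 : HasDerivAt (fun t : ℝ => t / Φinf) (1 / Φinf) Φ := by
      simpa using (hasDerivAt_id Φ).div_const Φinf
    have h3 := (xlogx_deriv Φinf Φ hx0.ne').sub h2
    have h4 := h1.add (h3.const_mul (R * T * Φinf))
    rw [hfe]
    rw [HasDerivAt.deriv (f := fun t => μb * t + R * T * Φinf *
        ((t / Φinf) * Real.log (t / Φinf) - t / Φinf)) h4]
    field_simp
    ring
  -- derivative of g
  have hgd : deriv g Γ = μs + R * T * (Real.log y - Real.log (1 - y)) := by
    have hge : g = fun t => γ0 + μs * t + R * T * Γinf *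
        ((t / Γinf) * Real.log (t / Γinf) + (1 - t / Γinf) * Real.log (1 - t / Γinf)) :=
      funext hg
    have h1 : HasDerivAt (fun t : ℝ => γ0 + μs * t) μs Γ := by
      simpa using ((hasDerivAt_id Γ).const_mul μs).const_add γ0
    have h3 := (xlogx_deriv Γinf Γ hy0.ne').add
      (one_sub_xlogx_deriv Γinf Γ (by linarith : (1 : ℝ) - y ≠ 0))
    have h4 := h1.add (h3.const_mul (R * T * Γinf))
    have h5 : ∀ L1 L2 : ℝ, R * T * Γinf * ((L1 + 1) * (1 / Γinf) + (L2 + 1) * (-(1 / Γinf)))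
        = R * T * (L1 - L2) := by
      intro L1 L2; field_simp; ring
    rw [hge, HasDerivAt.deriv (f := fun t => γ0 + μs * t + R * T * Γinf *
        ((t / Γinf) * Real.log (t / Γinf) + (1 - t / Γinf) * Real.log (1 - t / Γinf))) h4, h5]
  -- key factorization
  have hlogl : Real.log lam = (μb - μs) / (R * T) := by
    rw [hlameq, Real.log_exp]
  set A : ℝ := lam * x * (1 - y) with hAdef
  have hA0 : 0 < A := mul_pos (mul_pos hlam hx0) (by linarith)
  have hlogA : Real.log A = Real.log lam + Real.log x + Real.log (1 - y) := by
    rw [hAdef, Real.log_mul (mul_pos hlam hx0).ne' (by linarith), 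
        Real.log_mul hlam.ne' hx0.ne']
  have hfac1 : deriv g Γ - deriv f Φ = R * T * (Real.log y - Real.log A) := by
    rw [hfd, hgd, hlogA, hlogl]
    field_simp
    ring
  have hfac2 : S Φ Γ = kd * (A - y) := by
    rw [hS, hkad, hAdef]; ring
  rw [hfac1, hfac2]
  have := log_key hA0 hy0
  have h := mul_nonneg (mul_nonneg hRT.le hkd.le)
    (neg_nonneg.mpr (log_key hA0 hy0))
  nlinarith [log_key hA0 hy0, mul_pos hRT hkd]
end

section
/- Let θ_Y ∈ (π/2, π) (hydrophobic substrate) and E > 0. If 0 ≤ Γ₁ < Γ₂ < 1 and γ(Γᵢ) = 1 + E ln(1 - Γᵢ) > 0 with γ(Γᵢ) ≥ |cos θ_Y| for i = 1, 2, then the equilibrium contact angles θ_e(Γᵢ) = arccos(cos θ_Y / γ(Γᵢ)) satisfy θ_e(Γ₂) ≥ θ_e(Γ₁) ≥ θ_Y, i.e., surfactants make the droplet more hydrophobic. -/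
theorem statement17 (E θY : ℝ) (hE : 0 < E) (hθY : θY ∈ Set.Ioo (Real.pi / 2) Real.pi)
    (Γ₁ Γ₂ : ℝ) (h0 : 0 ≤ Γ₁) (h12 : Γ₁ < Γ₂) (h2 : Γ₂ < 1)
    (hpos1 : 0 < 1 + E * Real.log (1 - Γ₁)) (hpos2 : 0 < 1 + E * Real.log (1 - Γ₂))
    (hge1 : |Real.cos θY| ≤ 1 + E * Real.log (1 - Γ₁))
    (hge2 : |Real.cos θY| ≤ 1 + E * Real.log (1 - Γ₂)) :
    θY ≤ Real.arccos (Real.cos θY / (1 + E * Real.log (1 - Γ₁))) ∧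
    Real.arccos (Real.cos θY / (1 + E * Real.log (1 - Γ₁))) ≤
      Real.arccos (Real.cos θY / (1 + E * Real.log (1 - Γ₂))) := by
  obtain ⟨hθ1, hθ2⟩ := hθY
  set c := Real.cos θY with hc
  set γ₁ := 1 + E * Real.log (1 - Γ₁) with hγ1
  set γ₂ := 1 + E * Real.log (1 - Γ₂) with hγ2
  have hcneg : c < 0 := by
    exact Real.cos_neg_of_pi_div_two_lt_of_lt hθ1 (by linarith [Real.pi_pos])
  have habs : |c| = -c := abs_of_neg hcneg
  have hnc1 : -c ≤ γ₁ := by rw [habs] at hge1; exact hge1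
  have hnc2 : -c ≤ γ₂ := by rw [habs] at hge2; exact hge2
  -- γ₁ ≤ 1
  have hlog1 : Real.log (1 - Γ₁) ≤ 0 :=
    Real.log_nonpos (by linarith) (by linarith)
  have hγ1le1 : γ₁ ≤ 1 := by nlinarith
  -- γ₂ < γ₁
  have hlt : γ₂ < γ₁ := by
    have : Real.log (1 - Γ₂) < Real.log (1 - Γ₁) :=
      Real.log_lt_log (by linarith) (by linarith)
    nlinarith
  -- bounds on quotients
  have hq1_ge : -1 ≤ c / γ₁ := by
    rw [le_div_iff₀ hpos1]; linarith
  have hq2_ge : -1 ≤ c / γ₂ := by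
    rw [le_div_iff₀ hpos2]; linarith
  have hq1_le : c / γ₁ ≤ 1 := by
    have : c / γ₁ ≤ 0 := div_nonpos_of_nonpos_of_nonneg hcneg.le hpos1.le
    linarith
  have hq2_le : c / γ₂ ≤ 1 := by
    have : c / γ₂ ≤ 0 := div_nonpos_of_nonpos_of_nonneg hcneg.le hpos2.le
    linarith
  have hdiv_le : c / γ₁ ≤ c := by
    rw [div_le_iff₀ hpos1]; nlinarith
  have hdiv12 : c / γ₂ ≤ c / γ₁ := by
    rw [div_le_div_iff₀ hpos2 hpos1]; nlinarith
  constructor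
  · have : θY = Real.arccos c := (Real.arccos_cos (by linarith [Real.pi_pos]) hθ2.le).symm
    rw [this]
    exact Real.strictAntiOn_arccos.antitoneOn ⟨hq1_ge, hq1_le⟩
      ⟨by linarith, by linarith⟩ hdiv_le
  · exact Real.strictAntiOn_arccos.antitoneOn ⟨hq2_ge, hq2_le⟩
      ⟨hq1_ge, hq1_le⟩ hdiv12
end
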